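/- Let K be a natural number and let κ_1, …, κ_K and u_1, …, u_K be real numbers with 0 ≤ κ_k ≤ u_k ≤ 1 for every k ∈ {1, …, K}. Then ∏_{k=1}^{K} (1 − κ_k) − ∏_{k=1}^{K} (1 − u_k) ≤ Σ_{k=1}^{K} (u_k − κ_k) · ∏_{i=1}^{k−1} (1 − κ_i). -/

import Mathlib

/-- The gap between the cascade-model rewards computed from upper confidence bounds `u`
and true attraction probabilities `κ` is bounded by the sum of per-position gaps
weighted by the examination probabilities (items indexed `k = 0, …, K-1`). -/
theorem stmt3 (K : ℕ) (κ u : ℕ → ℝ)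
    (h : ∀ k ∈ Finset.range K, 0 ≤ κ k ∧ κ k ≤ u k ∧ u k ≤ 1) :
    (∏ k ∈ Finset.range K, (1 - κ k)) - ∏ k ∈ Finset.range K, (1 - u k) ≤
      ∑ k ∈ Finset.range K, (u k - κ k) * ∏ i ∈ Finset.range k, (1 - κ i) := by
  induction K with
  | zero => simp
  | succ n ih =>
    have hmem : ∀ k ∈ Finset.range n, 0 ≤ κ k ∧ κ k ≤ u k ∧ u k ≤ 1 := by
      intro k hk
      exact h k (Finset.mem_range.mpr (Nat.lt_succ_of_lt (Finset.mem_range.mp hk)))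
    have ihn := ih hmem
    have hn := h n (Finset.mem_range.mpr (Nat.lt_succ_self n))
    have hκn : 0 ≤ κ n := hn.1
    have hun : κ n ≤ u n := hn.2.1
    have hu1 : u n ≤ 1 := hn.2.2
    have hPκ : 0 ≤ ∏ k ∈ Finset.range n, (1 - κ k) := by
      apply Finset.prod_nonneg
      intro k hk
      have := hmem k hk
      linarith [this.1, this.2.1, this.2.2]
    have hPu : 0 ≤ ∏ k ∈ Finset.range n, (1 - u k) := by
      apply Finset.prod_nonneg
      intro k hk
      have := hmem k hk
      linarith [this.1, this.2.1, this.2.2]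
    have hPle : (∏ k ∈ Finset.range n, (1 - u k)) ≤ ∏ k ∈ Finset.range n, (1 - κ k) := by
      apply Finset.prod_le_prod
      · intro k hk
        have := hmem k hk
        linarith [this.2.2]
      · intro k hk
        have := hmem k hk
        linarith [this.2.1]
    rw [Finset.prod_range_succ, Finset.prod_range_succ, Finset.sum_range_succ]
    have key : (∏ k ∈ Finset.range n, (1 - κ k)) * (1 - κ n) -
        (∏ k ∈ Finset.range n, (1 - u k)) * (1 - u n) ≤
        ((∏ k ∈ Finset.range n, (1 - κ k)) - ∏ k ∈ Finset.range n, (1 - u k)) +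
        (u n - κ n) * ∏ i ∈ Finset.range n, (1 - κ i) := by
      nlinarith [mul_nonneg (sub_nonneg.mpr hPle) hκn, mul_nonneg (sub_nonneg.mpr hun) (sub_nonneg.mpr hPle)]
    linarith
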